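/- Let k, r, t, N be positive integers with r | k, and suppose there exists a k × (tk/r) 0/1 matrix R such that its columns split into t groups whose supports partition [k] within each group, each column has exactly r ones, and any two rows share at most one common support position. Let n = N + tk/r. Then any code of length n, dimension k, constructed by the Pyramid-splitting construction from an (N+t, k) MDS code using R has minimum distance exactly n − k − ⌈kt/r⌉ + t + 1 = N − k + t + 1. -/

import Mathlib

/-- Construction I (Pyramid splitting of the last t parities of an (N+t,k) MDS
code according to a matrix R with t partition groups, column weight r and
pairwise row intersections of size ≤ 1) yields a code of length
n = N + t·k/r whose minimum distance (length minus the largest cardinality of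
a set of columns not spanning everything) equals N − k + t + 1
= n − k − ⌈kt/r⌉ + t + 1. -/
theorem stmt_14 {F : Type*} [Field F] (N t k r : ℕ)
    (hk : 0 < k) (hr : 0 < r) (ht : 0 < t) (hkN : k ≤ N) (hrk : r ∣ k)
    (Ghat : Matrix (Fin k) (Fin (N + t)) F)
    (hsys : ∀ i j : Fin k,
      Ghat i (Fin.castLE (by omega) j) = if i = j then 1 else 0)
    (hMDS : ∀ S : Finset (Fin (N + t)), S.card = k →
      LinearIndependent F (fun j : S => (fun i : Fin k => Ghat i j.1)))
    (Rcol : Fin t → Fin (k / r) → Finset (Fin k))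
    (hRsize : ∀ a b, (Rcol a b).card = r)
    (hRpart : ∀ (a : Fin t) (i : Fin k), ∃! b, i ∈ Rcol a b)
    (hRrow : ∀ i i' : Fin k, i ≠ i' →
      {p : Fin t × Fin (k / r) | i ∈ Rcol p.1 p.2 ∧ i' ∈ Rcol p.1 p.2}.Subsingleton)
    (G : Matrix (Fin k) (Fin N ⊕ Fin t × Fin (k / r)) F)
    (hG1 : ∀ (i : Fin k) (j : Fin N),
      G i (Sum.inl j) = Ghat i (Fin.castLE (by omega) j))
    (hG2 : ∀ (i : Fin k) (a : Fin t) (b : Fin (k / r)),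
      G i (Sum.inr (a, b)) =
        if i ∈ Rcol a b then Ghat i ⟨N + a, by have := a.isLt; omega⟩ else 0) :
    (N + t * (k / r)) -
      sSup {m : ℕ | ∃ S : Finset (Fin N ⊕ Fin t × Fin (k / r)), S.card = m ∧
        Submodule.span F ((fun j => fun i : Fin k => G i j) '' ↑S) ≠ ⊤}
      = N - k + t + 1 := by
  classical
  have hq : 0 < k / r := Nat.div_pos (Nat.le_of_dvd hk hrk) hr
  -- the dot-product functional
  -- Key lemma A: a vector orthogonal to k MDS columns is zero
  have keyA : ∀ (S : Finset (Fin (N + t))), S.card = k → ∀ x : Fin k → F,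
      (∀ j ∈ S, ∑ i, x i * Ghat i j = 0) → x = 0 := by
    intro S hS x hx
    have hne : Nonempty S := by
      rw [Finset.nonempty_coe_sort, ← Finset.card_pos, hS]; exact hk
    have hli := hMDS S hS
    have hspan : Submodule.span F (Set.range (fun j : S => fun i : Fin k => Ghat i j.1)) = ⊤ :=
      hli.span_eq_top_of_card_eq_finrank (by simp [hS])
    let φ : (Fin k → F) →ₗ[F] F :=
      { toFun := fun v => ∑ i, x i * v i
        map_add' := by intro u v; simp [mul_add, Finset.sum_add_distrib]
        map_smul' := by intro c v; simp [Finset.mul_sum, mul_left_comm] }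
    have hker : Submodule.span F (Set.range (fun j : S => fun i : Fin k => Ghat i j.1))
        ≤ LinearMap.ker φ := by
      rw [Submodule.span_le]
      rintro _ ⟨j, rfl⟩
      simpa [φ] using hx j.1 j.2
    rw [hspan] at hker
    funext i
    have := hker (Submodule.mem_top (x := Pi.single i (1 : F)))
    simpa [φ, Pi.single_apply, mul_ite] using this
  -- entries of Ghat in the parity part are nonzero
  have hent : ∀ (i : Fin k) (j : Fin (N + t)), k ≤ j.1 → Ghat i j ≠ 0 := by
    intro i j hj hzero
    set S : Finset (Fin (N + t)) :=
      insert j ((Finset.univ.erase i).image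
        (fun l : Fin k => Fin.castLE (by omega) l)) with hSdef
    have hinj : Function.Injective (fun l : Fin k => (Fin.castLE (by omega) l : Fin (N + t))) :=
      fun a b h => by simpa [Fin.ext_iff] using h
    have hjnot : j ∉ (Finset.univ.erase i).image
        (fun l : Fin k => (Fin.castLE (by omega) l : Fin (N + t))) := by
      simp only [Finset.mem_image]
      rintro ⟨l, -, h⟩
      have hv : (l : ℕ) = (j : ℕ) := congrArg Fin.val h
      have := l.isLt
      omega
    have hScard : S.card = k := by
      rw [hSdef, Finset.card_insert_of_notMem hjnot,
        Finset.card_image_of_injective _ hinj, Finset.card_erase_of_mem (Finset.mem_univ i)]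
      simp; omega
    have hx0 := keyA S hScard (Pi.single i 1 : Fin k → F) ?_
    · have := congrFun hx0 i
      simp at this
    · intro j' hj'
      have hsum : ∑ i', (Pi.single i 1 : Fin k → F) i' * Ghat i' j' = Ghat i j' := by
        simp [Pi.single_apply, ite_mul]
      rw [hsum]
      rw [hSdef, Finset.mem_insert] at hj'
      rcases hj' with rfl | hj'
      · exact hzero
      · obtain ⟨l, hl, rfl⟩ := Finset.mem_image.1 hj'
        rw [Finset.mem_erase] at hl
        rw [hsys i l, if_neg (fun h => hl.1 h.symm)]
  -- key lemma B : weight of an MDS codeword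
  have keyB : ∀ x : Fin k → F, x ≠ 0 →
      N + t - k + 1 ≤
        (Finset.univ.filter (fun j : Fin (N + t) => ∑ i, x i * Ghat i j ≠ 0)).card := by
    intro x hx
    have hz : (Finset.univ.filter (fun j : Fin (N + t) => ¬ (∑ i, x i * Ghat i j ≠ 0))).card
        ≤ k - 1 := by
      by_contra hc
      rw [not_le] at hc
      obtain ⟨S, hSsub, hScard⟩ := Finset.exists_subset_card_eq
        (s := Finset.univ.filter (fun j : Fin (N + t) => ¬ (∑ i, x i * Ghat i j ≠ 0)))
        (n := k) (by omega)
      refine hx (keyA S hScard x ?_)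
      intro j hj
      have := hSsub hj
      simp only [Finset.mem_filter, not_not] at this
      exact this.2
    have := Finset.card_filter_add_card_filter_not
      (s := (Finset.univ : Finset (Fin (N + t))))
      (p := fun j => ∑ i, x i * Ghat i j ≠ 0)
    simp only [Finset.card_univ, Fintype.card_fin] at this
    omega

  -- the fiber map for each group
  let β : Fin t → Fin k → Fin (k / r) := fun a i => (hRpart a i).exists.choose
  have hβ : ∀ (a : Fin t) (i : Fin k) (b : Fin (k / r)), i ∈ Rcol a b ↔ β a i = b := by
    intro a i b
    constructor
    · intro h
      exact (hRpart a i).unique (hRpart a i).exists.choose_spec h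
    · rintro rfl
      exact (hRpart a i).exists.choose_spec
  -- summing a group of split columns recovers the MDS column
  have hgroup : ∀ (x : Fin k → F) (a : Fin t),
      ∑ b, ∑ i, x i * G i (Sum.inr (a, b))
        = ∑ i, x i * Ghat i ⟨N + a, by have := a.isLt; omega⟩ := by
    intro x a
    have h1 : ∀ b : Fin (k / r), ∑ i, x i * G i (Sum.inr (a, b))
        = ∑ i ∈ Finset.univ.filter (fun i => β a i = b),
            x i * Ghat i ⟨N + a, by have := a.isLt; omega⟩ := by
      intro b
      rw [Finset.sum_filter]
      refine Finset.sum_congr rfl fun i _ => ?_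
      rw [hG2, mul_ite, mul_zero, if_congr (hβ a i b) rfl rfl]
    simp only [h1]
    exact Finset.sum_fiberwise _ _ _
  -- key lemma C : weight of a codeword of C
  have keyC : ∀ x : Fin k → F, x ≠ 0 →
      N + t - k + 1 ≤ (Finset.univ.filter
        (fun j : Fin N ⊕ Fin t × Fin (k / r) => ∑ i, x i * G i j ≠ 0)).card := by
    intro x hx
    have hsupp := keyB x hx
    have hsel : ∀ a : Fin t,
        (∑ i, x i * Ghat i ⟨N + a, by have := a.isLt; omega⟩ ≠ 0) →
        ∃ b, ∑ i, x i * G i (Sum.inr (a, b)) ≠ 0 := by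
      intro a ha
      by_contra hb
      push_neg at hb
      exact ha (by rw [← hgroup x a]; exact Finset.sum_eq_zero fun b _ => hb b)
    let bsel : Fin t → Fin (k / r) := fun a =>
      if h : ∃ b, ∑ i, x i * G i (Sum.inr (a, b)) ≠ 0 then h.choose else ⟨0, hq⟩
    let ψ : Fin (N + t) → Fin N ⊕ Fin t × Fin (k / r) := fun j =>
      if h : (j : ℕ) < N then Sum.inl ⟨(j : ℕ), h⟩
      else Sum.inr (⟨(j : ℕ) - N, by have := j.isLt; omega⟩,
        bsel ⟨(j : ℕ) - N, by have := j.isLt; omega⟩)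
    refine le_trans hsupp (Finset.card_le_card_of_injOn ψ ?_ ?_)
    · intro j hj
      simp only [Finset.mem_coe, Finset.mem_filter, Finset.mem_univ, true_and] at hj ⊢
      by_cases h : (j : ℕ) < N
      · simp only [ψ, dif_pos h]
        have hcast : (Fin.castLE (by omega : N ≤ N + t) ⟨(j : ℕ), h⟩ : Fin (N + t)) = j :=
          Fin.ext rfl
        simpa only [hG1, hcast] using hj
      · simp only [ψ, dif_neg h]
        set a : Fin t := ⟨(j : ℕ) - N, by have := j.isLt; omega⟩ with hadef
        have hje : (⟨N + (a : ℕ), by have := a.isLt; omega⟩ : Fin (N + t)) = j := by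
          apply Fin.ext
          simp only [hadef]
          have := j.isLt
          omega
        have hex : ∃ b, ∑ i, x i * G i (Sum.inr (a, b)) ≠ 0 := by
          apply hsel a
          rw [hje]
          exact hj
        simpa only [bsel, dif_pos hex] using hex.choose_spec
    · intro j hj j' hj' hψ
      by_cases h1 : (j : ℕ) < N <;> by_cases h2 : (j' : ℕ) < N <;>
        simp only [ψ, dif_pos, dif_neg, h1, h2, Sum.inl.injEq, Sum.inr.injEq,
          Prod.mk.injEq, Fin.mk.injEq, dite_true, dite_false] at hψ
      · exact Fin.ext hψ
      · exact absurd hψ (by simp)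
      · exact absurd hψ (by simp)
      · have := j.isLt; have := j'.isLt
        exact Fin.ext (by omega)
  -- value of the threshold
  have hcard_univ : Fintype.card (Fin N ⊕ Fin t × Fin (k / r)) = N + t * (k / r) := by
    simp [Fintype.card_sum, Fintype.card_prod, mul_comm]
  -- Upper bound: any non-spanning set has size ≤ t * (k / r) + k - t - 1
  have hUB : ∀ m ∈ {m : ℕ | ∃ S : Finset (Fin N ⊕ Fin t × Fin (k / r)), S.card = m ∧
      Submodule.span F ((fun j => fun i : Fin k => G i j) '' ↑S) ≠ ⊤},
      m ≤ t * (k / r) + k - t - 1 := by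
    rintro m ⟨S, hScard, hSspan⟩
    obtain ⟨φ, hφ0, hφ⟩ := Submodule.exists_dual_map_eq_bot_of_lt_top
      (lt_top_iff_ne_top.2 hSspan) inferInstance
    set x : Fin k → F := fun i => φ (Pi.single i 1) with hxdef
    have hφv : ∀ v : Fin k → F, φ v = ∑ i, v i * x i := by
      intro v
      conv_lhs => rw [pi_eq_sum_univ v, map_sum]
      refine Finset.sum_congr rfl fun i _ => ?_
      rw [map_smul, smul_eq_mul]
      congr 1
      show _ = φ (Pi.single i 1)
      exact congrArg φ (funext fun j' => by simp [Pi.single_apply, eq_comm])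
    have hxne : x ≠ 0 := by
      intro h0
      apply hφ0
      apply LinearMap.ext
      intro v
      rw [hφv v, h0]
      simp
    have hvanish : ∀ j ∈ S, ∑ i, x i * G i j = 0 := by
      intro j hj
      have hmem : (fun i : Fin k => G i j) ∈ Submodule.span F
          ((fun j => fun i : Fin k => G i j) '' ↑S) :=
        Submodule.subset_span ⟨j, hj, rfl⟩
      have := Submodule.mem_map_of_mem (f := φ) hmem
      rw [hφ, Submodule.mem_bot] at this
      rw [← this, hφv]
      exact Finset.sum_congr rfl fun i _ => mul_comm _ _
    have hdisj : Disjoint S (Finset.univ.filter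
        (fun j : Fin N ⊕ Fin t × Fin (k / r) => ∑ i, x i * G i j ≠ 0)) := by
      rw [Finset.disjoint_left]
      intro j hj hjT
      simp only [Finset.mem_filter] at hjT
      exact hjT.2 (hvanish j hj)
    have hle := Finset.card_le_card (Finset.subset_univ
      (S ∪ Finset.univ.filter (fun j : Fin N ⊕ Fin t × Fin (k / r) => ∑ i, x i * G i j ≠ 0)))
    rw [Finset.card_union_of_disjoint hdisj, Finset.card_univ, hcard_univ] at hle
    have hTcard := keyC x hxne
    omega
  -- Membership : an explicit non-spanning set of maximal size
  set i0 : Fin k := ⟨0, hk⟩ with hi0def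
  set T0 : Finset (Fin N ⊕ Fin t × Fin (k / r)) :=
    Finset.univ.filter (fun j => G i0 j ≠ 0) with hT0def
  have hT0L : T0.toLeft = Finset.univ.filter (fun j : Fin N => (j : ℕ) = 0 ∨ k ≤ (j : ℕ)) := by
    ext j
    simp only [Finset.mem_toLeft, hT0def, Finset.mem_filter, Finset.mem_univ, true_and]
    rw [hG1]
    by_cases h : (j : ℕ) < k
    · have hcast : (Fin.castLE (by omega : N ≤ N + t) j : Fin (N + t))
          = Fin.castLE (by omega : k ≤ N + t) ⟨(j : ℕ), h⟩ := Fin.ext rfl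
      rw [hcast, hsys i0 ⟨(j : ℕ), h⟩]
      constructor
      · intro hne
        left
        by_contra hj0
        exact hne (if_neg (by simp [hi0def, Fin.ext_iff]; omega))
      · intro hor
        have : (j : ℕ) = 0 := by omega
        rw [if_pos (by simp [hi0def, Fin.ext_iff, this])]
        exact one_ne_zero
    · constructor
      · intro _; right; omega
      · intro _
        exact hent i0 _ (by simpa using not_lt.1 h)
  have hT0R : T0.toRight = Finset.univ.filter
      (fun p : Fin t × Fin (k / r) => i0 ∈ Rcol p.1 p.2) := by
    ext p
    simp only [Finset.mem_toRight, hT0def, Finset.mem_filter, Finset.mem_univ, true_and]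
    rw [show (Sum.inr p : Fin N ⊕ Fin t × Fin (k / r)) = Sum.inr (p.1, p.2) by rw [Prod.mk.eta],
      hG2]
    by_cases h : i0 ∈ Rcol p.1 p.2
    · simp only [h, if_true, iff_true]
      exact hent i0 _ (by simp; omega)
    · simp [h]
  have hT0Lcard : T0.toLeft.card = N - k + 1 := by
    rw [hT0L]
    rw [Finset.filter_or]
    rw [Finset.card_union_of_disjoint (by
      rw [Finset.disjoint_left]
      intro j hj hj'
      simp only [Finset.mem_filter] at hj hj'
      omega)]
    have h1 : Finset.univ.filter (fun j : Fin N => (j : ℕ) = 0) = {⟨0, by omega⟩} := by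
      ext j
      simp [Fin.ext_iff]
    have h2 : (Finset.univ.filter (fun j : Fin N => k ≤ (j : ℕ))).card = N - k := by
      rw [show N - k = (Finset.range (N - k)).card from (Finset.card_range _).symm]
      apply Finset.card_nbij' (fun j : Fin N => (j : ℕ) - k)
        (fun m : ℕ => if h : m + k < N then (⟨m + k, h⟩ : Fin N) else (⟨0, by omega⟩ : Fin N))
      · intro j hj
        simp only [Finset.mem_coe, Finset.mem_filter, Finset.mem_univ, true_and] at hj
        simp only [Finset.mem_coe, Finset.mem_range]
        have := j.isLt
        omega
      · intro m hm
        simp only [Finset.mem_coe, Finset.mem_range] at hm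
        dsimp only
        rw [dif_pos (by omega)]
        simp only [Finset.mem_coe, Finset.mem_filter, Finset.mem_univ, true_and]
        omega
      · intro j hj
        simp only [Finset.mem_coe, Finset.mem_filter, Finset.mem_univ, true_and] at hj
        have := j.isLt
        dsimp only
        rw [dif_pos (by omega)]
        exact Fin.ext (by simp; omega)
      · intro m hm
        simp only [Finset.mem_coe, Finset.mem_range] at hm
        dsimp only
        rw [dif_pos (by omega)]
        simp
    rw [h1, h2, Finset.card_singleton]
    omega
  have hT0Rcard : T0.toRight.card = t := by
    have hbij : (Finset.univ.filter
        (fun p : Fin t × Fin (k / r) => i0 ∈ Rcol p.1 p.2)).card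
        = (Finset.univ : Finset (Fin t)).card := by
      apply Finset.card_nbij' (fun p : Fin t × Fin (k / r) => p.1)
        (fun a : Fin t => ((a, (hRpart a i0).exists.choose) : Fin t × Fin (k / r)))
      · intro p _
        exact Finset.mem_univ _
      · intro a _
        simp only [Finset.mem_coe, Finset.mem_filter, Finset.mem_univ, true_and]
        exact (hRpart a i0).exists.choose_spec
      · intro p hp
        simp only [Finset.mem_coe, Finset.mem_filter, Finset.mem_univ, true_and] at hp
        exact Prod.ext rfl ((hRpart p.1 i0).unique ((hRpart p.1 i0).exists.choose_spec) hp)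
      · intro a _
        rfl
    rw [hT0R, hbij, Finset.card_univ, Fintype.card_fin]
  have hT0card : T0.card = N - k + 1 + t := by
    rw [← Finset.toLeft_disjSum_toRight (u := T0), Finset.card_disjSum, hT0Lcard, hT0Rcard]
  have hmem : (t * (k / r) + k - t - 1) ∈ {m : ℕ | ∃ S : Finset (Fin N ⊕ Fin t × Fin (k / r)),
      S.card = m ∧ Submodule.span F ((fun j => fun i : Fin k => G i j) '' ↑S) ≠ ⊤} := by
    refine ⟨T0ᶜ, ?_, ?_⟩
    · rw [Finset.card_compl, hcard_univ, hT0card]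
      have : t ≤ t * (k / r) := Nat.le_mul_of_pos_right t hq
      omega
    · intro hspan
      have hone : (Pi.single i0 1 : Fin k → F) ∈ Submodule.span F
          ((fun j => fun i : Fin k => G i j) '' ↑(T0ᶜ)) := by
        rw [hspan]; exact Submodule.mem_top
      let φ : (Fin k → F) →ₗ[F] F := LinearMap.proj i0
      have hker : Submodule.span F ((fun j => fun i : Fin k => G i j) '' ↑(T0ᶜ))
          ≤ LinearMap.ker φ := by
        rw [Submodule.span_le]
        rintro _ ⟨j, hj, rfl⟩
        rw [Finset.mem_coe, Finset.mem_compl, hT0def] at hj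
        simp only [Finset.mem_filter, Finset.mem_univ, true_and, not_not] at hj
        simpa [φ] using hj
      have := hker hone
      simp [φ, LinearMap.mem_ker] at this
  -- Assemble
  have hbdd : BddAbove {m : ℕ | ∃ S : Finset (Fin N ⊕ Fin t × Fin (k / r)), S.card = m ∧
      Submodule.span F ((fun j => fun i : Fin k => G i j) '' ↑S) ≠ ⊤} :=
    ⟨t * (k / r) + k - t - 1, fun m hm => hUB m hm⟩
  have hsup : sSup {m : ℕ | ∃ S : Finset (Fin N ⊕ Fin t × Fin (k / r)), S.card = m ∧
      Submodule.span F ((fun j => fun i : Fin k => G i j) '' ↑S) ≠ ⊤} = t * (k / r) + k - t - 1 :=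
    le_antisymm (csSup_le ⟨_, hmem⟩ hUB) (le_csSup hbdd hmem)
  rw [hsup]
  have : t ≤ t * (k / r) := Nat.le_mul_of_pos_right t hq
  omega
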